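/- Let n ≥ 2 and m ≥ 2 be integers, k a field of characteristic prime to d, and f(x₁,…,x_n), g(y₁,…,y_m) homogeneous forms of the same degree d with coefficients in k whose vanishing defines smooth hypersurfaces. Let X_f ⊂ P^n_k be the smooth hypersurface defined by f(x₁,…,x_n) + x₀^d = 0 and X_g ⊂ P^m_k the smooth hypersurface defined by g(y₁,…,y_m) + y₀^d = 0. Then the rational map from P^n_k ×_k P^m_k to P^{n+m−1}_k sending the point with bihomogeneous coordinates (x₀,…,x_n; y₀,…,y_m) to the point with homogeneous coordinates (x₁/x₀,…,x_n/x₀, y₁/y₀,…,y_m/y₀) induces a dominant rational map of degree d from X_f ×_k X_g onto the smooth hypersurface in P^{n+m−1}_k defined by f(z₁,…,z_n) − g(z_{n+1},…,z_{n+m}) = 0. -/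

import Mathlib

open MvPolynomial

noncomputable section

namespace Stmt2

/-- Jacobian criterion over a field `L` : `{f = 0}` defines a smooth hypersurface. -/
def JacSmoothF {L : Type} [Field L] {N : ℕ} (f : MvPolynomial (Fin N) L) : Prop :=
  ∀ v : Fin N → L, v ≠ 0 → eval v f = 0 → ∃ i, eval v (pderiv i f) ≠ 0

/-- The Shioda–Katsura map on homogeneous coordinates : it sends
`((x₀ : … : xₙ), (y₀ : … : y_m))` to `(x₁/x₀, …, xₙ/x₀, y₁/y₀, …, y_m/y₀)`, written with
the homogeneous coordinates `(x₁ y₀, …, xₙ y₀, x₀ y₁, …, x₀ y_m)`. -/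
def psiVec {K : Type} [Field K] {n m : ℕ} (x : Fin (n + 1) → K) (y : Fin (m + 1) → K) :
    Fin (n + m) → K :=
  fun p => Fin.addCases (fun i => x i.succ * y 0) (fun j => y j.succ * x 0) p

/-- The fibre of the Shioda–Katsura rational map `X_f ×_k X_g ⇢ Z` over a point `z`. -/
def psiFiber {K : Type} [Field K] {n m : ℕ} (Ff : MvPolynomial (Fin (n + 1)) K)
    (Gg : MvPolynomial (Fin (m + 1)) K) (z : Projectivization K (Fin (n + m) → K)) :
    Set (Projectivization K (Fin (n + 1) → K) × Projectivization K (Fin (m + 1) → K)) :=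
  {pq | eval pq.1.rep Ff = 0 ∧ eval pq.2.rep Gg = 0 ∧
    ∃ hne : psiVec pq.1.rep pq.2.rep ≠ 0, Projectivization.mk K _ hne = z}

end Stmt2

-- AUX LEMMAS (to be placed after `end Stmt2` in proof.lean)
open Stmt2

section Aux

lemma degree_of_mem_support {K : Type} [CommRing K] {N d : ℕ} {φ : MvPolynomial (Fin N) K}
    (hφ : φ.IsHomogeneous d) {s : Fin N →₀ ℕ} (hs : s ∈ φ.support) :
    ∑ i : Fin N, s i = d := by
  have h1 : Finsupp.degree s = d := by
    by_contra h
    exact mem_support_iff.mp hs (hφ.coeff_eq_zero h)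
  rw [← h1, Finsupp.degree]
  exact (Finset.sum_subset (Finset.subset_univ _) (by
    intro x _ hx
    exact Finsupp.notMem_support_iff.mp hx)).symm

lemma eval_smul_homog {K : Type} [CommRing K] {N d : ℕ} {φ : MvPolynomial (Fin N) K}
    (hφ : φ.IsHomogeneous d) (c : K) (v : Fin N → K) :
    eval (c • v) φ = c ^ d * eval v φ := by
  rw [eval_eq', eval_eq', Finset.mul_sum]
  refine Finset.sum_congr rfl fun s hs => ?_
  have hdeg := degree_of_mem_support hφ hs
  calc coeff s φ * ∏ i, (c • v) i ^ s i
      = coeff s φ * ((∏ i, c ^ s i) * ∏ i, v i ^ s i) := by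
        rw [← Finset.prod_mul_distrib]
        simp [mul_pow]
    _ = c ^ d * (coeff s φ * ∏ i, v i ^ s i) := by
        rw [Finset.prod_pow_eq_pow_sum, hdeg]; ring

lemma eval_zero_homog {K : Type} [CommRing K] {N d : ℕ} (hd : 0 < d)
    {φ : MvPolynomial (Fin N) K} (hφ : φ.IsHomogeneous d) : eval (0 : Fin N → K) φ = 0 := by
  have := eval_smul_homog hφ 0 0
  rwa [smul_zero, zero_pow hd.ne', zero_mul] at this

lemma X_mul_pderiv_monomial {K : Type} [CommRing K] {N : ℕ} (j : Fin N) (s : Fin N →₀ ℕ)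
    (a : K) : X j * pderiv j (monomial s a) = monomial s (a * s j) := by
  rw [pderiv_monomial]
  by_cases h : s j = 0
  · simp [h]
  · rw [X, monomial_mul, one_mul]
    congr 2
    rw [add_comm]
    exact tsub_add_cancel_of_le (Finsupp.single_le_iff.mpr (Nat.one_le_iff_ne_zero.mpr h))

lemma euler_eval {K : Type} [CommRing K] {N d : ℕ} {φ : MvPolynomial (Fin N) K}
    (hφ : φ.IsHomogeneous d) (v : Fin N → K) :
    ∑ j : Fin N, v j * eval v (pderiv j φ) = d * eval v φ := by
  have key : ∑ j : Fin N, X j * pderiv j φ = (d : K) • φ := by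
    conv_lhs => rw [φ.as_sum]
    conv_rhs => rw [φ.as_sum]
    rw [Finset.smul_sum]
    simp only [map_sum, Finset.mul_sum]
    rw [Finset.sum_comm]
    refine Finset.sum_congr rfl fun s hs => ?_
    have hdeg : ∑ i : Fin N, s i = d := degree_of_mem_support hφ hs
    calc ∑ j : Fin N, X j * pderiv j (monomial s (coeff s φ))
        = ∑ j : Fin N, monomial s (coeff s φ * s j) :=
          Finset.sum_congr rfl fun j _ => X_mul_pderiv_monomial j s _
      _ = monomial s (coeff s φ * ∑ j : Fin N, (s j : K)) := by
          rw [Finset.mul_sum, map_sum]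
      _ = (d : K) • monomial s (coeff s φ) := by
          rw [smul_monomial]
          congr 1
          rw [← Nat.cast_sum, hdeg, mul_comm, smul_eq_mul]
  have := congrArg (eval v) key
  rw [map_sum, smul_eval] at this
  simpa only [map_mul, eval_X] using this

lemma smooth_cone {K : Type} [Field K] {N d : ℕ} (hd : 0 < d) (hdK : (d : K) ≠ 0)
    {f : MvPolynomial (Fin N) K} (hsm : JacSmoothF f) :
    JacSmoothF (rename Fin.succ f + X 0 ^ d) := by
  intro v hv hev
  by_cases h0 : v 0 = 0
  · have hvs : (v ∘ Fin.succ) ≠ 0 := by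
      intro h
      apply hv
      funext i
      refine Fin.cases h0 (fun j => ?_) i
      exact congrFun h j
    have hev' : eval (v ∘ Fin.succ) f = 0 := by
      rw [map_add, eval_rename, map_pow, eval_X, h0, zero_pow hd.ne', add_zero] at hev
      exact hev
    obtain ⟨i, hi⟩ := hsm _ hvs hev'
    refine ⟨i.succ, ?_⟩
    rw [map_add, pderiv_rename (Fin.succ_injective _), pderiv_pow,
      pderiv_X_of_ne (Fin.succ_ne_zero i).symm, mul_zero, add_zero, eval_rename]
    exact hi
  · refine ⟨0, ?_⟩
    have hvars : (0 : Fin (N + 1)) ∉ (rename Fin.succ f).vars := by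
      intro h
      obtain ⟨j, _, hj⟩ := Finset.mem_image.mp (vars_rename _ _ h)
      exact Fin.succ_ne_zero j hj
    rw [map_add, pderiv_eq_zero_of_notMem_vars hvars, zero_add, pderiv_pow, pderiv_X_self,
      mul_one, map_mul, map_pow, eval_X]
    simp only [map_natCast]
    exact mul_ne_zero hdK (pow_ne_zero _ h0)

lemma exists_deriv {K : Type} [Field K] {N d : ℕ} (hdK : (d : K) ≠ 0)
    {φ : MvPolynomial (Fin N) K} (hφ : φ.IsHomogeneous d) (hsm : JacSmoothF φ)
    (w : Fin N → K) (hw : w ≠ 0) : ∃ i, eval w (pderiv i φ) ≠ 0 := by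
  by_cases h : eval w φ = 0
  · exact hsm w hw h
  · by_contra hc
    push_neg at hc
    have he := euler_eval hφ w
    rw [Finset.sum_eq_zero (fun j _ => by rw [hc j, mul_zero])] at he
    exact mul_ne_zero hdK h he.symm

lemma smooth_Z {K : Type} [Field K] {n m d : ℕ} (hdK : (d : K) ≠ 0)
    {f : MvPolynomial (Fin n) K} {g : MvPolynomial (Fin m) K}
    (hf : f.IsHomogeneous d) (hg : g.IsHomogeneous d)
    (hfsm : JacSmoothF f) (hgsm : JacSmoothF g) :
    JacSmoothF (rename (Fin.castAdd m) f - rename (Fin.natAdd n) g) := by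
  intro v hv _
  have hcn : ∀ (i : Fin n) (j : Fin m), Fin.castAdd m i ≠ Fin.natAdd n j := by
    intro i j h
    have := congrArg Fin.val h
    simp only [Fin.coe_castAdd, Fin.coe_natAdd] at this
    omega
  by_cases ha : (v ∘ Fin.castAdd m) = 0
  · have hb : (v ∘ Fin.natAdd n) ≠ 0 := by
      intro hb
      apply hv
      funext p
      refine Fin.addCases (fun i => congrFun ha i) (fun j => congrFun hb j) p
    obtain ⟨j, hj⟩ := exists_deriv hdK hg hgsm _ hb
    refine ⟨Fin.natAdd n j, ?_⟩
    have h1 : pderiv (Fin.natAdd n j) (rename (Fin.castAdd m) f) = 0 := by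
      apply pderiv_eq_zero_of_notMem_vars
      intro h
      obtain ⟨i, _, hi⟩ := Finset.mem_image.mp (vars_rename _ _ h)
      exact hcn i j hi
    have hinj : Function.Injective (Fin.natAdd n : Fin m → Fin (n + m)) := by
      intro x y h
      have := congrArg Fin.val h
      simp only [Fin.coe_natAdd] at this
      exact Fin.ext (by omega)
    rw [map_sub, h1, zero_sub, pderiv_rename hinj, map_neg, eval_rename]
    exact neg_ne_zero.mpr hj
  · obtain ⟨i, hi⟩ := exists_deriv hdK hf hfsm _ ha
    refine ⟨Fin.castAdd m i, ?_⟩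
    have h1 : pderiv (Fin.castAdd m i) (rename (Fin.natAdd n) g) = 0 := by
      apply pderiv_eq_zero_of_notMem_vars
      intro h
      obtain ⟨j, _, hj⟩ := Finset.mem_image.mp (vars_rename _ _ h)
      exact hcn i j hj.symm
    rw [map_sub, h1, sub_zero, pderiv_rename (Fin.castAdd_injective n m), eval_rename]
    exact hi

variable {K : Type} [Field K] {n m : ℕ}

lemma psiVec_castAdd (x : Fin (n + 1) → K) (y : Fin (m + 1) → K) (i : Fin n) :
    psiVec x y (Fin.castAdd m i) = x i.succ * y 0 := by
  simp [psiVec]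

lemma psiVec_natAdd (x : Fin (n + 1) → K) (y : Fin (m + 1) → K) (j : Fin m) :
    psiVec x y (Fin.natAdd n j) = y j.succ * x 0 := by
  simp [psiVec]

lemma psiVec_smul (c c' : K) (x : Fin (n + 1) → K) (y : Fin (m + 1) → K) :
    psiVec (c • x) (c' • y) = (c * c') • psiVec x y := by
  funext p
  induction p using Fin.addCases with
  | left i => simp [psiVec_castAdd]; ring
  | right j => simp [psiVec_natAdd]; ring

lemma cons_ne_zero' {N : ℕ} (v : Fin N → K) : (Fin.cons 1 v : Fin (N + 1) → K) ≠ 0 := by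
  intro h
  have := congrFun h 0
  simp at this

lemma coneF_isHomogeneous {N d : ℕ} {f : MvPolynomial (Fin N) K} (hf : f.IsHomogeneous d) :
    (rename Fin.succ f + X 0 ^ d : MvPolynomial (Fin (N + 1)) K).IsHomogeneous d := by
  refine hf.rename_isHomogeneous.add ?_
  simpa using (isHomogeneous_X K (0 : Fin (N + 1))).pow d

lemma eval_coneF {N d : ℕ} (f : MvPolynomial (Fin N) K) (x : Fin (N + 1) → K) :
    eval x (rename Fin.succ f + X 0 ^ d) = eval (x ∘ Fin.succ) f + x 0 ^ d := by
  rw [map_add, eval_rename, map_pow, eval_X]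

lemma fiber_count [IsAlgClosed K] {d : ℕ} (hd : 0 < d) (hdK : (d : K) ≠ 0)
    {f : MvPolynomial (Fin n) K} {g : MvPolynomial (Fin m) K}
    (hf : f.IsHomogeneous d) (hg : g.IsHomogeneous d)
    (z : Projectivization K (Fin (n + m) → K))
    (hZ0 : eval z.rep (rename (Fin.castAdd m) f - rename (Fin.natAdd n) g) = 0)
    (hH : eval z.rep (rename (Fin.castAdd m) f) ≠ 0) :
    (psiFiber (rename Fin.succ f + X 0 ^ d) (rename Fin.succ g + X 0 ^ d) z).Finite ∧
    (psiFiber (rename Fin.succ f + X 0 ^ d) (rename Fin.succ g + X 0 ^ d) z).ncard = d := by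
  classical
  set w : Fin (n + m) → K := z.rep with hw
  set a : Fin n → K := w ∘ Fin.castAdd m with ha'
  set b : Fin m → K := w ∘ Fin.natAdd n with hb'
  set c : K := eval a f with hc'
  have hF : (rename Fin.succ f + X 0 ^ d : MvPolynomial (Fin (n + 1)) K).IsHomogeneous d :=
    coneF_isHomogeneous hf
  have hG : (rename Fin.succ g + X 0 ^ d : MvPolynomial (Fin (m + 1)) K).IsHomogeneous d :=
    coneF_isHomogeneous hg
  have hc : c ≠ 0 := by rwa [eval_rename] at hH
  have heq : eval b g = c := by
    rw [map_sub, eval_rename, eval_rename, sub_eq_zero] at hZ0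
    exact hZ0.symm
  have ha : a ≠ 0 := fun h => hc (by rw [hc', h, eval_zero_homog hd hf])
  have hb : b ≠ 0 := fun h => hc (by rw [← heq, h, eval_zero_homog hd hg])
  set c' : K := -c⁻¹ with hcc'
  have hc'0 : c' ≠ 0 := neg_ne_zero.mpr (inv_ne_zero hc)
  set S : Set K := {t : K | t ^ d = c'} with hS
  set E : K → Projectivization K (Fin (n + 1) → K) × Projectivization K (Fin (m + 1) → K) :=
    fun t => (Projectivization.mk K (Fin.cons 1 (t • a)) (cons_ne_zero' _),
      Projectivization.mk K (Fin.cons 1 (t • b)) (cons_ne_zero' _)) with hE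
  -- `t • w` glues `t • a` and `t • b`
  have hconsvec : ∀ t : K, psiVec (Fin.cons (1:K) (t • a)) (Fin.cons (1:K) (t • b)) = t • w := by
    intro t
    funext p
    induction p using Fin.addCases with
    | left i => rw [psiVec_castAdd]; simp [ha']
    | right j => rw [psiVec_natAdd]; simp [hb']
  have key : psiFiber (rename Fin.succ f + X 0 ^ d) (rename Fin.succ g + X 0 ^ d) z = E '' S := by
    ext pq
    constructor
    · rintro ⟨hPF, hQG, hne, hmk⟩
      obtain ⟨u, hu⟩ := (Projectivization.mk_eq_mk_iff K _ _ hne (Projectivization.rep_nonzero z)).mp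
        (hmk.trans (Projectivization.mk_rep z).symm)
      set x : Fin (n + 1) → K := pq.1.rep with hx'
      set y : Fin (m + 1) → K := pq.2.rep with hy'
      have hblock1 : ∀ i : Fin n, x i.succ * y 0 = u * a i := fun i => by
        have := congrFun hu (Fin.castAdd m i)
        rw [psiVec_castAdd] at this
        simpa [Units.smul_def, ha'] using this.symm
      have hblock2 : ∀ j : Fin m, y j.succ * x 0 = u * b j := fun j => by
        have := congrFun hu (Fin.natAdd n j)
        rw [psiVec_natAdd] at this
        simpa [Units.smul_def, hb'] using this.symm
      have hx0 : x 0 ≠ 0 := by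
        intro h0
        apply hb
        funext j
        have := hblock2 j
        rw [h0, mul_zero] at this
        have := (mul_eq_zero.mp this.symm).resolve_left u.ne_zero
        simpa using this
      have hy0 : y 0 ≠ 0 := by
        intro h0
        apply ha
        funext i
        have := hblock1 i
        rw [h0, mul_zero] at this
        have := (mul_eq_zero.mp this.symm).resolve_left u.ne_zero
        simpa using this
      set t : K := (u : K) / (x 0 * y 0) with ht'
      have hxs : x ∘ Fin.succ = (t * x 0) • a := by
        funext i
        have h := hblock1 i
        simp only [Function.comp_apply, Pi.smul_apply, smul_eq_mul, ht']
        field_simp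
        linear_combination h
      have hys : y ∘ Fin.succ = (t * y 0) • b := by
        funext j
        have h := hblock2 j
        simp only [Function.comp_apply, Pi.smul_apply, smul_eq_mul, ht']
        field_simp
        linear_combination h
      have htS : t ∈ S := by
        rw [eval_coneF, hxs, eval_smul_homog hf, ← hc'] at hPF
        have hx0d : (x 0) ^ d ≠ 0 := pow_ne_zero _ hx0
        rw [hS, Set.mem_setOf_eq, hcc']
        have h2 : t ^ d * c = -1 := by
          refine mul_left_cancel₀ hx0d ?_
          rw [mul_pow] at hPF
          linear_combination hPF
        field_simp
        linear_combination h2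
      refine ⟨t, htS, ?_⟩
      have h1 : Projectivization.mk K x (Projectivization.rep_nonzero pq.1)
          = Projectivization.mk K (Fin.cons 1 (t • a)) (cons_ne_zero' _) := by
        rw [Projectivization.mk_eq_mk_iff]
        refine ⟨Units.mk0 (x 0) hx0, ?_⟩
        funext p
        induction p using Fin.cases with
        | zero => simp [Units.smul_def]
        | succ i =>
          have hxi := congrFun hxs i
          simp only [Function.comp_apply, Pi.smul_apply, smul_eq_mul] at hxi
          simp only [Units.smul_def, Units.val_mk0, Pi.smul_apply, Fin.cons_succ,
            smul_eq_mul, hxi]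
          ring
      have h2 : Projectivization.mk K y (Projectivization.rep_nonzero pq.2)
          = Projectivization.mk K (Fin.cons 1 (t • b)) (cons_ne_zero' _) := by
        rw [Projectivization.mk_eq_mk_iff]
        refine ⟨Units.mk0 (y 0) hy0, ?_⟩
        funext p
        induction p using Fin.cases with
        | zero => simp [Units.smul_def]
        | succ j =>
          have hyj := congrFun hys j
          simp only [Function.comp_apply, Pi.smul_apply, smul_eq_mul] at hyj
          simp only [Units.smul_def, Units.val_mk0, Pi.smul_apply, Fin.cons_succ,
            smul_eq_mul, hyj]
          ring
      refine Prod.ext ?_ ?_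
      · exact (h1.symm.trans (Projectivization.mk_rep pq.1))
      · exact (h2.symm.trans (Projectivization.mk_rep pq.2))
    · rintro ⟨t, htS, rfl⟩
      have ht0 : t ≠ 0 := by
        intro h
        rw [hS, Set.mem_setOf_eq, h, zero_pow hd.ne'] at htS
        exact hc'0 htS.symm
      have htd : t ^ d = c' := htS
      -- representatives of the two mk's
      obtain ⟨u1, hu1⟩ := (Projectivization.mk_eq_mk_iff K _ _
        (Projectivization.rep_nonzero (E t).1) (cons_ne_zero' (t • a))).mp
        (Projectivization.mk_rep _)
      obtain ⟨u2, hu2⟩ := (Projectivization.mk_eq_mk_iff K _ _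
        (Projectivization.rep_nonzero (E t).2) (cons_ne_zero' (t • b))).mp
        (Projectivization.mk_rep _)
      have hevF : eval (Fin.cons (1:K) (t • a)) (rename Fin.succ f + X 0 ^ d) = 0 := by
        rw [eval_coneF]
        have h1 : (Fin.cons (1:K) (t • a)) ∘ Fin.succ = t • a := by
          funext i; simp
        rw [h1, eval_smul_homog hf, ← hc', htd, hcc']
        simp [hc]
      have hevG : eval (Fin.cons (1:K) (t • b)) (rename Fin.succ g + X 0 ^ d) = 0 := by
        rw [eval_coneF]
        have h1 : (Fin.cons (1:K) (t • b)) ∘ Fin.succ = t • b := by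
          funext j; simp
        rw [h1, eval_smul_homog hg, heq, htd, hcc']
        simp [hc]
      have hrep1 : eval (E t).1.rep (rename Fin.succ f + X 0 ^ d) = 0 := by
        rw [← hu1, Units.smul_def, eval_smul_homog hF, hevF, mul_zero]
      have hrep2 : eval (E t).2.rep (rename Fin.succ g + X 0 ^ d) = 0 := by
        rw [← hu2, Units.smul_def, eval_smul_homog hG, hevG, mul_zero]
      have hpsi : psiVec (E t).1.rep (E t).2.rep = ((u1 : K) * u2 * t) • w := by
        rw [← hu1, ← hu2, Units.smul_def, Units.smul_def, psiVec_smul, hconsvec, smul_smul]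
      have hpsine : psiVec (E t).1.rep (E t).2.rep ≠ 0 := by
        rw [hpsi]
        exact smul_ne_zero (by simp [u1.ne_zero, u2.ne_zero, ht0]) (Projectivization.rep_nonzero z)
      refine ⟨hrep1, hrep2, hpsine, ?_⟩
      have : Projectivization.mk K (psiVec (E t).1.rep (E t).2.rep) hpsine
          = Projectivization.mk K w (Projectivization.rep_nonzero z) := by
        rw [Projectivization.mk_eq_mk_iff]
        exact ⟨Units.mk0 _ (by simp [u1.ne_zero, u2.ne_zero, ht0]), hpsi.symm⟩
      exact this.trans (Projectivization.mk_rep z)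
  -- injectivity of E
  have hinj : Set.InjOn E S := by
    intro t1 _ t2 _ hE12
    have h1 := congrArg Prod.fst hE12
    rw [hE] at h1
    dsimp only at h1
    rw [Projectivization.mk_eq_mk_iff] at h1
    obtain ⟨v, hv⟩ := h1
    have hv0 : (v : K) = 1 := by
      have := congrFun hv 0
      simpa [Units.smul_def] using this
    obtain ⟨i, hi⟩ := Function.ne_iff.mp ha
    have := congrFun hv i.succ
    rw [Units.smul_def] at this
    simp only [Pi.smul_apply, Fin.cons_succ, Pi.smul_apply, smul_eq_mul, hv0, one_mul] at this
    exact mul_right_cancel₀ (by simpa using hi) this.symm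
  -- the root set
  set p : Polynomial K := Polynomial.X ^ d - Polynomial.C c' with hp'
  have hp0 : p ≠ 0 := Polynomial.X_pow_sub_C_ne_zero hd c'
  have hsep : p.Separable := Polynomial.separable_X_pow_sub_C c' hdK hc'0
  have hSroots : S = ↑p.roots.toFinset := by
    ext t
    simp only [hS, Set.mem_setOf_eq, Finset.coe_sort_coe, Multiset.mem_toFinset,
      Finset.mem_coe, Polynomial.mem_roots, hp0, ne_eq, not_false_iff, true_and,
      Polynomial.IsRoot.def, hp', Polynomial.eval_sub, Polynomial.eval_pow,
      Polynomial.eval_X, Polynomial.eval_C, sub_eq_zero]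
    rw [Polynomial.mem_roots (Polynomial.X_pow_sub_C_ne_zero hd c'), Polynomial.IsRoot.def,
      Polynomial.eval_sub, Polynomial.eval_pow, Polynomial.eval_X, Polynomial.eval_C, sub_eq_zero]
  have hcard : S.ncard = d := by
    rw [hSroots, Set.ncard_coe_finset,
      Multiset.toFinset_card_of_nodup (Polynomial.nodup_roots hsep),
      Polynomial.splits_iff_card_roots.mp (IsAlgClosed.splits p), hp',
      Polynomial.natDegree_X_pow_sub_C]
  have hfin : S.Finite := by rw [hSroots]; exact p.roots.toFinset.finite_toSet
  constructor
  · rw [key]; exact hfin.image E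
  · rw [key, Set.ncard_image_of_injOn hinj, hcard]

end Aux

open Stmt2 in
/-- Shioda–Katsura.  Let `n, m ≥ 2`, let `k` be a field of
characteristic prime to `d`, and let `f (x₁, …, xₙ)`, `g (y₁, …, y_m)` be forms of degree
`d` over `k` defining smooth hypersurfaces.  Let `X_f : f + x₀^d = 0 ⊆ ℙⁿ_k` and
`X_g : g + y₀^d = 0 ⊆ ℙᵐ_k`.  Then these are smooth hypersurfaces and the map
`(x; y) ↦ (x₁/x₀, …, xₙ/x₀, y₁/y₀, …, y_m/y₀)` induces a dominant rational map of degree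
`d` from `X_f ×_k X_g` onto the smooth hypersurface
`Z : f (z₁, …, zₙ) - g (z_{n+1}, …, z_{n+m}) = 0 ⊆ ℙ^{n+m-1}_k` (dominance and the degree
are expressed by counting points in the fibres over a dense open set of `Z`, over an
algebraic closure of `k`). -/
theorem stmt2 (k : Type) [Field k] (n m d : ℕ) (hn : 2 ≤ n) (hm : 2 ≤ m)
    (hd : 0 < d) (hchar : (d : k) ≠ 0)
    (f : MvPolynomial (Fin n) k) (g : MvPolynomial (Fin m) k)
    (hf : f.IsHomogeneous d) (hg : g.IsHomogeneous d)
    (hfsm : JacSmoothF (MvPolynomial.map (algebraMap k (AlgebraicClosure k)) f))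
    (hgsm : JacSmoothF (MvPolynomial.map (algebraMap k (AlgebraicClosure k)) g))
    (Ff : MvPolynomial (Fin (n + 1)) k) (hFf : Ff = rename Fin.succ f + X 0 ^ d)
    (Gg : MvPolynomial (Fin (m + 1)) k) (hGg : Gg = rename Fin.succ g + X 0 ^ d)
    (Z : MvPolynomial (Fin (n + m)) k)
    (hZ : Z = rename (Fin.castAdd m) f - rename (Fin.natAdd n) g) :
    JacSmoothF (MvPolynomial.map (algebraMap k (AlgebraicClosure k)) Ff) ∧
    JacSmoothF (MvPolynomial.map (algebraMap k (AlgebraicClosure k)) Gg) ∧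
    JacSmoothF (MvPolynomial.map (algebraMap k (AlgebraicClosure k)) Z) ∧
    (∀ (x : Fin (n + 1) → AlgebraicClosure k) (y : Fin (m + 1) → AlgebraicClosure k),
      eval x (MvPolynomial.map (algebraMap k (AlgebraicClosure k)) Ff) = 0 →
      eval y (MvPolynomial.map (algebraMap k (AlgebraicClosure k)) Gg) = 0 →
      eval (psiVec x y) (MvPolynomial.map (algebraMap k (AlgebraicClosure k)) Z) = 0) ∧
    ∃ H : MvPolynomial (Fin (n + m)) (AlgebraicClosure k), (∃ dH, H.IsHomogeneous dH) ∧
      (∃ z : Projectivization (AlgebraicClosure k) (Fin (n + m) → AlgebraicClosure k),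
        eval z.rep (MvPolynomial.map (algebraMap k (AlgebraicClosure k)) Z) = 0 ∧
          eval z.rep H ≠ 0) ∧
      ∀ z : Projectivization (AlgebraicClosure k) (Fin (n + m) → AlgebraicClosure k),
        eval z.rep (MvPolynomial.map (algebraMap k (AlgebraicClosure k)) Z) = 0 →
        eval z.rep H ≠ 0 →
          (psiFiber (MvPolynomial.map (algebraMap k (AlgebraicClosure k)) Ff)
            (MvPolynomial.map (algebraMap k (AlgebraicClosure k)) Gg) z).Finite ∧
          (psiFiber (MvPolynomial.map (algebraMap k (AlgebraicClosure k)) Ff)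
            (MvPolynomial.map (algebraMap k (AlgebraicClosure k)) Gg) z).ncard = d := by
  have hdK : ((d : ℕ) : AlgebraicClosure k) ≠ 0 := by
    intro h
    apply hchar
    have h2 : (algebraMap k (AlgebraicClosure k)) (d : k) = 0 := by
      rw [map_natCast]; exact h
    exact (map_eq_zero _).mp h2
  have hmapF : MvPolynomial.map (algebraMap k (AlgebraicClosure k)) Ff
      = rename Fin.succ (MvPolynomial.map (algebraMap k (AlgebraicClosure k)) f) + X 0 ^ d := by
    rw [hFf, map_add, map_rename, map_pow, map_X]
  have hmapG : MvPolynomial.map (algebraMap k (AlgebraicClosure k)) Gg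
      = rename Fin.succ (MvPolynomial.map (algebraMap k (AlgebraicClosure k)) g) + X 0 ^ d := by
    rw [hGg, map_add, map_rename, map_pow, map_X]
  have hmapZ : MvPolynomial.map (algebraMap k (AlgebraicClosure k)) Z
      = rename (Fin.castAdd m) (MvPolynomial.map (algebraMap k (AlgebraicClosure k)) f)
        - rename (Fin.natAdd n) (MvPolynomial.map (algebraMap k (AlgebraicClosure k)) g) := by
    rw [hZ, map_sub, map_rename, map_rename]
  have hf' := hf.map (algebraMap k (AlgebraicClosure k))
  have hg' := hg.map (algebraMap k (AlgebraicClosure k))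
  refine ⟨?_, ?_, ?_, ?_, ?_⟩
  · rw [hmapF]; exact smooth_cone hd hdK hfsm
  · rw [hmapG]; exact smooth_cone hd hdK hgsm
  · rw [hmapZ]; exact smooth_Z hdK hf' hg' hfsm hgsm
  · intro x y hx hy
    rw [hmapF, eval_coneF] at hx
    rw [hmapG, eval_coneF] at hy
    rw [hmapZ, map_sub, eval_rename, eval_rename]
    have h1 : psiVec x y ∘ Fin.castAdd m = y 0 • (x ∘ Fin.succ) := by
      funext i
      simp [psiVec_castAdd, mul_comm]
    have h2 : psiVec x y ∘ Fin.natAdd n = x 0 • (y ∘ Fin.succ) := by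
      funext j
      simp [psiVec_natAdd, mul_comm]
    rw [h1, h2, eval_smul_homog hf', eval_smul_homog hg']
    have hx' : eval (x ∘ Fin.succ) (MvPolynomial.map (algebraMap k (AlgebraicClosure k)) f)
        = -(x 0 ^ d) := by linear_combination hx
    have hy' : eval (y ∘ Fin.succ) (MvPolynomial.map (algebraMap k (AlgebraicClosure k)) g)
        = -(y 0 ^ d) := by linear_combination hy
    rw [hx', hy']
    ring
  · refine ⟨rename (Fin.castAdd m) (MvPolynomial.map (algebraMap k (AlgebraicClosure k)) f),
      ⟨d, hf'.rename_isHomogeneous⟩, ?_, ?_⟩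
    · -- existence of a point of `Z` where `H` does not vanish
      have hfne : MvPolynomial.map (algebraMap k (AlgebraicClosure k)) f ≠ 0 := by
        intro h
        have hv : (Pi.single (⟨0, by omega⟩ : Fin n) 1 : Fin n → AlgebraicClosure k) ≠ 0 := by
          intro hvv
          have := congrFun hvv ⟨0, by omega⟩
          simp at this
        obtain ⟨i, hi⟩ := hfsm _ hv (by rw [h, map_zero])
        rw [h] at hi
        simp at hi
      have hgne : MvPolynomial.map (algebraMap k (AlgebraicClosure k)) g ≠ 0 := by
        intro h
        have hv : (Pi.single (⟨0, by omega⟩ : Fin m) 1 : Fin m → AlgebraicClosure k) ≠ 0 := by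
          intro hvv
          have := congrFun hvv ⟨0, by omega⟩
          simp at this
        obtain ⟨i, hi⟩ := hgsm _ hv (by rw [h, map_zero])
        rw [h] at hi
        simp at hi
      obtain ⟨a, hafne⟩ : ∃ a, eval a (MvPolynomial.map (algebraMap k (AlgebraicClosure k)) f)
          ≠ 0 := by
        by_contra hcon
        push_neg at hcon
        exact hfne (MvPolynomial.funext fun x => by rw [hcon x, map_zero])
      obtain ⟨b0, hb0⟩ : ∃ b0, eval b0 (MvPolynomial.map (algebraMap k (AlgebraicClosure k)) g)
          ≠ 0 := by
        by_contra hcon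
        push_neg at hcon
        exact hgne (MvPolynomial.funext fun x => by rw [hcon x, map_zero])
      obtain ⟨lam, hlam⟩ := IsAlgClosed.exists_pow_nat_eq
        (eval a (MvPolynomial.map (algebraMap k (AlgebraicClosure k)) f)
          / eval b0 (MvPolynomial.map (algebraMap k (AlgebraicClosure k)) g)) hd
      have hbg : eval (lam • b0) (MvPolynomial.map (algebraMap k (AlgebraicClosure k)) g)
          = eval a (MvPolynomial.map (algebraMap k (AlgebraicClosure k)) f) := by
        rw [eval_smul_homog hg', hlam, div_mul_cancel₀ _ hb0]
      set wv : Fin (n + m) → AlgebraicClosure k := Fin.addCases a (lam • b0) with hwv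
      have hwa : wv ∘ Fin.castAdd m = a := by
        funext i
        simp [hwv]
      have hwb : wv ∘ Fin.natAdd n = lam • b0 := by
        funext j
        simp [hwv]
      have hane : a ≠ 0 := fun h => hafne (by rw [h, eval_zero_homog hd hf'])
      have hwne : wv ≠ 0 := by
        intro h
        apply hane
        funext i
        have := congrFun h (Fin.castAdd m i)
        simpa [hwv] using this
      refine ⟨Projectivization.mk (AlgebraicClosure k) wv hwne, ?_, ?_⟩
      all_goals
        obtain ⟨u, hu⟩ := (Projectivization.mk_eq_mk_iff (AlgebraicClosure k) _ _
          (Projectivization.rep_nonzero _) hwne).mp (Projectivization.mk_rep _)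
      · rw [hmapZ, ← hu, Units.smul_def,
          eval_smul_homog (hf'.rename_isHomogeneous.sub hg'.rename_isHomogeneous),
          map_sub, eval_rename, eval_rename, hwa, hwb, hbg, sub_self, mul_zero]
      · rw [← hu, Units.smul_def, eval_smul_homog hf'.rename_isHomogeneous, eval_rename, hwa]
        exact mul_ne_zero (pow_ne_zero _ u.ne_zero) hafne
    · intro z hZ0 hH0
      rw [hmapZ] at hZ0
      rw [hmapF, hmapG]
      exact fiber_count hd hdK hf' hg' z hZ0 hH0
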